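/- Let S be the quotient of the polynomial ring ℂ[x_0, ..., x_{p-1}] (p an odd prime ≥ 5) by the ideal generated by all monomials x_{i+k} x_{-i+k} for 1 ≤ i ≤ (p-3)/2 and 0 ≤ k ≤ p-1 (indices mod p). Then for every degree k ≥ 1, dim_ℂ S_k = k·p, so the Hilbert series of S is (1 + (p-2)t + t^2)/(1-t)^2. -/

import Mathlib

open MvPolynomial PowerSeries

/-- The monomial ideal of a cycle of `p` lines in `ℙ^{p-1}`: generated by the monomials
`x_{k+i} x_{k-i}` for `1 ≤ i ≤ (p-3)/2` and all `k` (indices mod `p`). -/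
noncomputable def cycleIdeal (p : ℕ) : Ideal (MvPolynomial (ZMod p) ℂ) :=
  Ideal.span {m | ∃ i k : ZMod p, 1 ≤ i.val ∧ i.val ≤ (p - 3) / 2 ∧
    m = X (k + i) * X (k - i)}

/-- The degree-`k` homogeneous component of the quotient ring `S = ℂ[x]/cycleIdeal`. -/
noncomputable def cycleDeg (p k : ℕ) :
    Submodule ℂ (MvPolynomial (ZMod p) ℂ ⧸ cycleIdeal p) :=
  Submodule.map (Ideal.Quotient.mkₐ ℂ (cycleIdeal p)).toLinearMap
    (homogeneousSubmodule (ZMod p) ℂ k)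

open Finsupp

/-- exponent vectors supported on two adjacent indices -/
def GoodExp (p : ℕ) (d : ZMod p →₀ ℕ) : Prop :=
  ∃ a : ZMod p, d.support ⊆ ({a, a + 1} : Finset (ZMod p))

lemma GoodExp.mono {p : ℕ} {d e : ZMod p →₀ ℕ} (h : GoodExp p d)
    (hs : e.support ⊆ d.support) : GoodExp p e := by
  obtain ⟨a, ha⟩ := h; exact ⟨a, hs.trans ha⟩

noncomputable def goodIdeal (p : ℕ) : Ideal (MvPolynomial (ZMod p) ℂ) where
  carrier := {f | ∀ d, GoodExp p d → coeff d f = 0}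
  add_mem' := by intro a b ha hb d hd; simp [coeff_add, ha d hd, hb d hd]
  zero_mem' := by intro d hd; simp
  smul_mem' := by
    intro c f hf d hd
    rw [smul_eq_mul, MvPolynomial.coeff_mul]
    refine Finset.sum_eq_zero ?_
    rintro ⟨e₁, e₂⟩ he
    have hsum : e₁ + e₂ = d := Finset.HasAntidiagonal.mem_antidiagonal.mp he
    have hsub : e₂.support ⊆ d.support := by
      intro x hx
      simp only [Finsupp.mem_support_iff] at hx ⊢
      intro h0
      rw [← hsum] at h0
      simp only [Finsupp.add_apply] at h0
      omega
    rw [hf e₂ (hd.mono hsub), mul_zero]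

lemma X_eq_monomial {p : ℕ} (u : ZMod p) :
    (X u : MvPolynomial (ZMod p) ℂ) = monomial (single u 1) 1 := by
  rw [← pow_one (X u), X_pow_eq_monomial]

/-- the standard-monomial family of degree `k` -/
noncomputable def dvec (p k : ℕ) (i : ZMod p × Fin k) : ZMod p →₀ ℕ :=
  Finsupp.single i.1 (i.2.val + 1) + Finsupp.single (i.1 + 1) (k - i.2.val - 1)

section
variable {p : ℕ} (hp : p.Prime) (hodd : Odd p) (hp5 : 5 ≤ p)
include hp hodd hp5

lemma natcast_ne {a : ℕ} (h1 : 1 ≤ a) (h2 : a < p) : ((a : ℕ) : ZMod p) ≠ 0 := by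
  intro h
  have hdvd := (ZMod.natCast_eq_zero_iff a p).mp h
  have := Nat.le_of_dvd (by omega) hdvd
  omega

lemma one_ne : (1 : ZMod p) ≠ 0 := by
  have := natcast_ne hp hodd hp5 (a := 1) le_rfl (by omega)
  simpa using this

lemma two_ne : (2 : ZMod p) ≠ 0 := by
  have := natcast_ne hp hodd hp5 (a := 2) (by omega) (by omega)
  simpa using this

lemma three_ne : (3 : ZMod p) ≠ 0 := by
  have := natcast_ne hp hodd hp5 (a := 3) (by omega) (by omega)
  simpa using this

lemma add_one_ne (a : ZMod p) : a + 1 ≠ a := by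
  intro h
  have : (1 : ZMod p) = 0 := by linear_combination h
  exact one_ne hp hodd hp5 this

lemma two_mul_eq_neg_one {j : ZMod p} (hj : j.val = (p - 1) / 2) : 2 * j = -1 := by
  haveI : Fact p.Prime := ⟨hp⟩
  obtain ⟨m, hm⟩ := hodd
  apply ZMod.val_injective
  have h1 : j.val + j.val < p := by omega
  have h2 : (j + j).val = j.val + j.val := ZMod.val_add_of_lt h1
  have h3 : (-1 : ZMod p).val = p - 1 := by
    rw [ZMod.neg_val]
    haveI : Fact (1 < p) := ⟨by omega⟩
    have h0 : (1 : ZMod p) ≠ 0 := one_ne_zero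
    simp [h0, ZMod.val_one]
  rw [two_mul, h2, h3]
  omega

lemma exists_gen {u v : ZMod p} (huv : u ≠ v) (h1 : v - u ≠ 1) (h2 : u - v ≠ 1) :
    ∃ i k : ZMod p, 1 ≤ i.val ∧ i.val ≤ (p - 3) / 2 ∧
      (X u * X v : MvPolynomial (ZMod p) ℂ) = X (k + i) * X (k - i) := by
  haveI : Fact p.Prime := ⟨hp⟩
  obtain ⟨m, hm⟩ := hodd
  have h2ne : (2 : ZMod p) ≠ 0 := two_ne hp ⟨m, hm⟩ hp5
  set i₀ : ZMod p := (u - v) * (2 : ZMod p)⁻¹ with hi₀def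
  have huv0 : u - v ≠ 0 := sub_ne_zero.mpr huv
  have h2i₀ : 2 * i₀ = u - v := by
    rw [hi₀def, mul_comm (u - v), ← mul_assoc, mul_inv_cancel₀ h2ne, one_mul]
  have hi₀ne : i₀ ≠ 0 := by
    intro h; rw [h, mul_zero] at h2i₀; exact huv0 h2i₀.symm
  have hvalne : i₀.val ≠ 0 := fun h => hi₀ne ((ZMod.val_eq_zero i₀).mp h)
  have hvlt : i₀.val < p := ZMod.val_lt i₀
  by_cases hc : i₀.val ≤ (p - 1) / 2
  · have hne2 : i₀.val ≠ (p - 1) / 2 := by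
      intro h
      have := two_mul_eq_neg_one hp ⟨m, hm⟩ hp5 h
      rw [h2i₀] at this
      exact h1 (by rw [← neg_eq_iff_eq_neg.mpr this]; ring)
    refine ⟨i₀, v + i₀, by omega, by omega, ?_⟩
    have e1 : v + i₀ + i₀ = u := by
      rw [add_assoc, ← two_mul, h2i₀]; ring
    have e2 : v + i₀ - i₀ = v := by ring
    rw [e1, e2]
  · set j : ZMod p := -i₀ with hjdef
    have hjval : j.val = p - i₀.val := by
      rw [hjdef, ZMod.neg_val]; simp [hi₀ne]
    have h2j : 2 * j = v - u := by rw [hjdef, mul_neg, h2i₀]; ring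
    have hne2 : j.val ≠ (p - 1) / 2 := by
      intro h
      have := two_mul_eq_neg_one hp ⟨m, hm⟩ hp5 h
      rw [h2j] at this
      exact h2 (by rw [← neg_eq_iff_eq_neg.mpr this]; ring)
    refine ⟨j, u + j, by omega, by omega, ?_⟩
    have e1 : u + j + j = v := by rw [add_assoc, ← two_mul, h2j]; ring
    have e2 : u + j - j = u := by ring
    rw [e1, e2, mul_comm]

lemma not_good_gen {i k : ZMod p} (hi1 : 1 ≤ i.val) (hi2 : i.val ≤ (p - 3) / 2) :
    ¬ GoodExp p (single (k + i) 1 + single (k - i) 1) := by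
  haveI : Fact p.Prime := ⟨hp⟩
  obtain ⟨m, hm⟩ := hodd
  set u := k + i with hu
  set v := k - i with hv
  have h2i : u - v = i + i := by rw [hu, hv]; ring
  have h2ival : (i + i).val = i.val + i.val := ZMod.val_add_of_lt (by omega)
  have huv : u ≠ v := by
    intro h
    have : i + i = 0 := by rw [← h2i, h, sub_self]
    rw [← ZMod.val_eq_zero, h2ival] at this
    omega
  have hd1 : u - v ≠ 1 := by
    intro h
    have : (u - v).val = 1 := by rw [h]; exact ZMod.val_one p
    rw [h2i, h2ival] at this; omega
  have hd2 : v - u ≠ 1 := by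
    intro h
    have hne : i + i ≠ 0 := by
      intro h0
      have := congrArg ZMod.val h0
      rw [h2ival, ZMod.val_zero] at this
      omega
    have hvu : v - u = -(i + i) := by rw [← h2i]; ring
    rw [hvu] at h
    have hval : ((-(i+i)) : ZMod p).val = p - (i+i).val := by
      rw [ZMod.neg_val]; simp [hne]
    rw [h, ZMod.val_one p, h2ival] at hval
    omega
  rintro ⟨a, hs⟩
  have hmemu : u ∈ (single u 1 + single v 1 : ZMod p →₀ ℕ).support := by
    simp [Finsupp.mem_support_iff, Finsupp.single_apply, huv]
  have hmemv : v ∈ (single u 1 + single v 1 : ZMod p →₀ ℕ).support := by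
    simp [Finsupp.mem_support_iff, Finsupp.single_apply, huv.symm]
  have hua : u = a ∨ u = a + 1 := by simpa using hs hmemu
  have hva : v = a ∨ v = a + 1 := by simpa using hs hmemv
  rcases hua with h1 | h1 <;> rcases hva with h2 | h2
  · exact huv (h1.trans h2.symm)
  · exact hd2 (by rw [h1, h2]; ring)
  · exact hd1 (by rw [h1, h2]; ring)
  · exact huv (h1.trans h2.symm)

lemma cycleIdeal_le_goodIdeal : cycleIdeal p ≤ goodIdeal p := by
  rw [cycleIdeal, Ideal.span_le]
  rintro f ⟨i, k, hi1, hi2, rfl⟩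
  intro d hd
  have hX : (X (k+i) * X (k-i) : MvPolynomial (ZMod p) ℂ)
      = MvPolynomial.monomial (single (k+i) 1 + single (k-i) 1) 1 := by
    rw [X_eq_monomial, X_eq_monomial, monomial_mul, one_mul]
  rw [hX, MvPolynomial.coeff_monomial, if_neg]
  intro h
  exact not_good_gen hp hodd hp5 hi1 hi2 (h ▸ hd)

lemma exists_bad_pair {d : ZMod p →₀ ℕ} (hd : d ≠ 0) (h : ¬ GoodExp p d) :
    ∃ u ∈ d.support, ∃ v ∈ d.support, u ≠ v ∧ v - u ≠ 1 ∧ u - v ≠ 1 := by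
  have c1 : (1 : ZMod p) ≠ 0 := one_ne hp hodd hp5
  have c2 : (2 : ZMod p) ≠ 0 := two_ne hp hodd hp5
  have c3 : (3 : ZMod p) ≠ 0 := three_ne hp hodd hp5
  obtain ⟨u, hu⟩ := Finsupp.support_nonempty_iff.mpr hd
  unfold GoodExp at h
  push_neg at h
  obtain ⟨v, hv, hv2⟩ := Finset.not_subset.mp (h u)
  simp only [Finset.mem_insert, Finset.mem_singleton, not_or] at hv2
  by_cases hcase : u - v = 1
  · obtain ⟨w, hw, hw2⟩ := Finset.not_subset.mp (h v)
    simp only [Finset.mem_insert, Finset.mem_singleton, not_or] at hw2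
    have hvu : v + 1 = u := by rw [← hcase]; ring
    by_cases hcase2 : w - u = 1
    · have hwu : w = u + 1 := by rw [← hcase2]; ring
      refine ⟨v, hv, w, hw, ?_, ?_, ?_⟩
      · intro hvw
        exact c2 (by linear_combination -hwu + hvu - hvw)
      · intro h1
        exact c1 (by linear_combination -hwu + hvu + h1)
      · intro h1
        exact c3 (by linear_combination -hwu + hvu - h1)
    · refine ⟨u, hu, w, hw, ?_, hcase2, ?_⟩
      · intro huw
        exact hw2.2 (by rw [hvu, huw])
      · intro h1
        exact hw2.1 (by linear_combination hcase - h1)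
  · refine ⟨u, hu, v, hv, fun h' => hv2.1 h'.symm, ?_, hcase⟩
    intro h1
    exact hv2.2 (by rw [← h1]; ring)

lemma monomial_bad_mem {d : ZMod p →₀ ℕ} (hd : d ≠ 0) (h : ¬ GoodExp p d) (c : ℂ) :
    monomial d c ∈ cycleIdeal p := by
  obtain ⟨u, hu, v, hv, huv, h1, h2⟩ := exists_bad_pair hp hodd hp5 hd h
  obtain ⟨i, k, hi1, hi2, hXX⟩ := exists_gen hp hodd hp5 huv h1 h2
  have hdu : 1 ≤ d u := by
    have := Finsupp.mem_support_iff.mp hu; omega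
  have hdv : 1 ≤ d v := by
    have := Finsupp.mem_support_iff.mp hv; omega
  have hsum : single u 1 + single v 1 + (d - (single u 1 + single v 1)) = d := by
    ext x
    simp only [Finsupp.add_apply, Finsupp.tsub_apply, Finsupp.single_apply]
    by_cases hux : u = x
    · by_cases hvx : v = x
      · exact absurd (hux.trans hvx.symm) huv
      · subst hux
        simp only [if_pos rfl, if_neg hvx, eq_self_iff_true, if_true]
        omega
    · by_cases hvx : v = x
      · subst hvx
        simp only [if_pos rfl, if_neg hux, eq_self_iff_true, if_true]
        omega
      · simp [if_neg hux, if_neg hvx]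
  have key : MvPolynomial.monomial d c
      = (X u * X v) * MvPolynomial.monomial (d - (single u 1 + single v 1)) c := by
    rw [X_eq_monomial, X_eq_monomial, monomial_mul, monomial_mul, one_mul, one_mul, hsum]
  rw [key, hXX]
  exact Ideal.mul_mem_right _ _ (Ideal.subset_span ⟨i, k, hi1, hi2, rfl⟩)

lemma degree_pair {d : ZMod p →₀ ℕ} {a : ZMod p}
    (ha : d.support ⊆ ({a, a + 1} : Finset (ZMod p))) :
    d.degree = d a + d (a + 1) := by
  have hane : a ≠ a + 1 := fun h => add_one_ne hp hodd hp5 a h.symm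
  rw [Finsupp.degree_apply,
    Finset.sum_subset ha (fun x _ hx => Finsupp.notMem_support_iff.mp hx),
    Finset.sum_pair hane]

omit hp hodd hp5 in
lemma dvec_support {k : ℕ} (i : ZMod p × Fin k) :
    (dvec p k i).support ⊆ ({i.1, i.1 + 1} : Finset (ZMod p)) := by
  refine (Finsupp.support_add).trans ?_
  apply Finset.union_subset
  · exact (Finsupp.support_single_subset).trans (by simp)
  · exact (Finsupp.support_single_subset).trans (by simp)

omit hp hodd hp5 in
lemma dvec_good {k : ℕ} (i : ZMod p × Fin k) : GoodExp p (dvec p k i) :=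
  ⟨i.1, dvec_support i⟩

lemma dvec_apply_fst {k : ℕ} (i : ZMod p × Fin k) : dvec p k i i.1 = i.2.val + 1 := by
  have : i.1 + 1 ≠ i.1 := add_one_ne hp hodd hp5 i.1
  simp [dvec, Finsupp.single_apply, this]

lemma dvec_apply_snd {k : ℕ} (i : ZMod p × Fin k) :
    dvec p k i (i.1 + 1) = k - i.2.val - 1 := by
  have : i.1 + 1 ≠ i.1 := add_one_ne hp hodd hp5 i.1
  simp [dvec, Finsupp.single_apply, this.symm]

lemma dvec_degree {k : ℕ} (i : ZMod p × Fin k) : (dvec p k i).degree = k := by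
  rw [degree_pair hp hodd hp5 (dvec_support i),
    dvec_apply_fst hp hodd hp5, dvec_apply_snd hp hodd hp5]
  have := i.2.2
  omega

lemma dvec_injective {k : ℕ} : Function.Injective (dvec p k) := by
  intro i j hij
  have hfi := dvec_apply_fst hp hodd hp5 i
  have hfj := dvec_apply_fst hp hodd hp5 j
  rcases eq_or_ne i.1 j.1 with h1 | h1
  · have : i.2.val + 1 = j.2.val + 1 := by
      rw [← hfi, ← hfj, hij, h1]
    have h2 : i.2 = j.2 := Fin.ext (by omega)
    exact Prod.ext h1 h2
  · exfalso
    have hi1 : dvec p k j i.1 ≠ 0 := by rw [← hij, hfi]; omega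
    have hj1 : dvec p k i j.1 ≠ 0 := by rw [hij, hfj]; omega
    have hji : i.1 = j.1 + 1 := by
      have hmem := dvec_support j (Finsupp.mem_support_iff.mpr hi1)
      simp only [Finset.mem_insert, Finset.mem_singleton] at hmem
      tauto
    have hij2 : j.1 = i.1 + 1 := by
      have hmem := dvec_support i (Finsupp.mem_support_iff.mpr hj1)
      simp only [Finset.mem_insert, Finset.mem_singleton] at hmem
      rcases hmem with h | h
      · exact absurd h.symm h1
      · exact h
    exact two_ne hp hodd hp5 (by linear_combination -hji - hij2)


lemma good_eq_dvec {k : ℕ} (hk : 1 ≤ k) {d : ZMod p →₀ ℕ} (hdeg : d.degree = k)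
    (hgood : GoodExp p d) : ∃ i : ZMod p × Fin k, d = dvec p k i := by
  obtain ⟨a, ha⟩ := hgood
  have hane : a + 1 ≠ a := add_one_ne hp hodd hp5 a
  have hsum : d a + d (a + 1) = k := by
    rw [← degree_pair hp hodd hp5 ha, hdeg]
  have hother : ∀ x, x ≠ a → x ≠ a + 1 → d x = 0 := by
    intro x h1 h2
    by_contra h0
    have := ha (Finsupp.mem_support_iff.mpr h0)
    simp only [Finset.mem_insert, Finset.mem_singleton] at this
    tauto
  by_cases hs : d a = 0
  · refine ⟨(a + 1, ⟨k - 1, by omega⟩), ?_⟩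
    have hdv : dvec p k (a + 1, ⟨k - 1, by omega⟩) = single (a + 1) k := by
      unfold dvec
      simp only
      have e1 : k - 1 + 1 = k := by omega
      have e2 : k - (k - 1) - 1 = 0 := by omega
      rw [e1, e2, Finsupp.single_zero, add_zero]
    rw [hdv]
    ext x
    rcases eq_or_ne x (a + 1) with rfl | hx
    · rw [Finsupp.single_eq_same]; omega
    · rw [Finsupp.single_eq_of_ne' (Ne.symm hx)]
      rcases eq_or_ne x a with rfl | hx2
      · exact hs
      · exact hother x hx2 hx
  · refine ⟨(a, ⟨d a - 1, by omega⟩), ?_⟩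
    have hdv : dvec p k (a, ⟨d a - 1, by omega⟩)
        = single a (d a) + single (a + 1) (d (a + 1)) := by
      unfold dvec
      simp only
      have e1 : d a - 1 + 1 = d a := by omega
      have e2 : k - (d a - 1) - 1 = d (a + 1) := by omega
      rw [e1, e2]
    rw [hdv]
    ext x
    simp only [Finsupp.add_apply, Finsupp.single_apply]
    by_cases h1 : a = x
    · subst h1
      simp [hane]
    · by_cases h2 : a + 1 = x
      · simp [h1, h2]
      · simp [h1, h2, hother x (fun hh => h1 hh.symm) (fun hh => h2 hh.symm)]

lemma finrank_cycleDeg {k : ℕ} (hk : 1 ≤ k) :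
    Module.finrank ℂ (cycleDeg p k) = k * p := by
  haveI : Fact p.Prime := ⟨hp⟩
  haveI : NeZero p := ⟨hp.ne_zero⟩
  classical
  set L := (Ideal.Quotient.mkₐ ℂ (cycleIdeal p)).toLinearMap with hL
  set w : ZMod p × Fin k → MvPolynomial (ZMod p) ℂ ⧸ cycleIdeal p :=
    fun i => L (monomial (dvec p k i) 1) with hw
  have hindep : LinearIndependent ℂ w := by
    rw [Fintype.linearIndependent_iff]
    intro g hg
    have hmem : (∑ i, g i • monomial (dvec p k i) 1) ∈ cycleIdeal p := by
      rw [← Ideal.Quotient.eq_zero_iff_mem]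
      have h1 : Ideal.Quotient.mk (cycleIdeal p) (∑ i, g i • monomial (dvec p k i) 1)
          = L (∑ i, g i • monomial (dvec p k i) 1) := rfl
      rw [h1, map_sum]
      simpa only [map_smul] using hg
    intro i
    have hco := cycleIdeal_le_goodIdeal hp hodd hp5 hmem (dvec p k i) (dvec_good i)
    rw [MvPolynomial.coeff_sum] at hco
    rw [Finset.sum_eq_single i] at hco
    · simpa [MvPolynomial.coeff_smul, MvPolynomial.coeff_monomial] using hco
    · intro j _ hji
      rw [MvPolynomial.coeff_smul, MvPolynomial.coeff_monomial,
        if_neg (fun hh => hji (dvec_injective hp hodd hp5 hh)), smul_zero]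
    · intro hni; exact absurd (Finset.mem_univ i) hni
  have hspan : cycleDeg p k = Submodule.span ℂ (Set.range w) := by
    apply le_antisymm
    · intro x hx
      obtain ⟨f, hf, rfl⟩ := Submodule.mem_map.mp hx
      rw [mem_homogeneousSubmodule] at hf
      have hsplit : L f = ∑ d ∈ f.support, L (monomial d (coeff d f)) := by
        conv_lhs => rw [f.as_sum]
        rw [map_sum]
      rw [hsplit]
      apply Submodule.sum_mem
      intro d hd0
      have hcne : coeff d f ≠ 0 := MvPolynomial.mem_support_iff.mp hd0
      have hdeg : d.degree = k := by
        have := hf hcne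
        rwa [Finsupp.degree_eq_weight_one]
      by_cases hgood : GoodExp p d
      · obtain ⟨i, rfl⟩ := good_eq_dvec hp hodd hp5 hk hdeg hgood
        have hrw : monomial (dvec p k i) (coeff (dvec p k i) f)
            = coeff (dvec p k i) f • monomial (dvec p k i) 1 := by
          rw [MvPolynomial.smul_monomial, smul_eq_mul, mul_one]
        rw [hrw, map_smul]
        exact Submodule.smul_mem _ _ (Submodule.subset_span ⟨i, rfl⟩)
      · have hdne : d ≠ 0 := by
          intro h0; rw [h0, map_zero] at hdeg; omega
        have hmem := monomial_bad_mem hp hodd hp5 hdne hgood (coeff d f)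
        have h0 : L (monomial d (coeff d f)) = 0 := by
          rwa [show L (monomial d (coeff d f))
            = Ideal.Quotient.mk (cycleIdeal p) (monomial d (coeff d f)) from rfl,
            Ideal.Quotient.eq_zero_iff_mem]
        rw [h0]; exact Submodule.zero_mem _
    · rw [Submodule.span_le]
      rintro x ⟨i, rfl⟩
      exact Submodule.mem_map_of_mem
        ((mem_homogeneousSubmodule _ _).mpr
          (isHomogeneous_monomial _ (dvec_degree hp hodd hp5 i)))
  rw [hspan, finrank_span_eq_card hindep, Fintype.card_prod, ZMod.card, Fintype.card_fin,
    Nat.mul_comm]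

lemma finrank_cycleDeg_zero : Module.finrank ℂ (cycleDeg p 0) = 1 := by
  haveI : Fact p.Prime := ⟨hp⟩
  classical
  set L := (Ideal.Quotient.mkₐ ℂ (cycleIdeal p)).toLinearMap with hL
  have hone : L 1 ≠ 0 := by
    intro h
    have hmem : (1 : MvPolynomial (ZMod p) ℂ) ∈ cycleIdeal p := by
      rwa [show L 1 = Ideal.Quotient.mk (cycleIdeal p) 1 from rfl,
        Ideal.Quotient.eq_zero_iff_mem] at h
    have := cycleIdeal_le_goodIdeal hp hodd hp5 hmem 0 ⟨0, by simp⟩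
    simp at this
  have hspan : cycleDeg p 0 = Submodule.span ℂ {L 1} := by
    apply le_antisymm
    · intro x hx
      obtain ⟨f, hf, rfl⟩ := Submodule.mem_map.mp hx
      rw [mem_homogeneousSubmodule] at hf
      have hsplit : L f = ∑ d ∈ f.support, L (monomial d (coeff d f)) := by
        conv_lhs => rw [f.as_sum]
        rw [map_sum]
      rw [hsplit]
      apply Submodule.sum_mem
      intro d hd0
      have hcne : coeff d f ≠ 0 := MvPolynomial.mem_support_iff.mp hd0
      have hdeg : d.degree = 0 := by
        have := hf hcne
        rwa [Finsupp.degree_eq_weight_one]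
      have hd0' : d = 0 := (Finsupp.degree_eq_zero_iff d).mp hdeg
      subst hd0'
      have hrw : monomial (0 : ZMod p →₀ ℕ) (coeff 0 f)
          = coeff 0 f • (1 : MvPolynomial (ZMod p) ℂ) := by
        rw [MvPolynomial.smul_eq_C_mul, mul_one, MvPolynomial.C_apply]
      rw [hrw, map_smul]
      exact Submodule.smul_mem _ _ (Submodule.mem_span_singleton_self _)
    · rw [Submodule.span_le, Set.singleton_subset_iff]
      exact Submodule.mem_map_of_mem
        ((mem_homogeneousSubmodule _ _).mpr (isHomogeneous_one _ _))
  rw [hspan, finrank_span_singleton hone]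

end

/-- Let `S` be the quotient of `ℂ[x_0, …, x_{p-1}]` (`p` an odd prime ≥ 5)
by the ideal generated by all monomials `x_{i+k} x_{-i+k}` for `1 ≤ i ≤ (p-3)/2` and
`0 ≤ k ≤ p-1` (indices mod `p`).  Then for every degree `k ≥ 1`, `dim_ℂ S_k = k·p`, so
the Hilbert series of `S` is `(1 + (p-2)t + t^2)/(1-t)^2`. -/
theorem cycle_of_lines_hilbert_series (p : ℕ) (hp : p.Prime) (hodd : Odd p) (hp5 : 5 ≤ p) :
    (∀ k : ℕ, 1 ≤ k → Module.finrank ℂ (cycleDeg p k) = k * p) ∧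
    PowerSeries.mk (fun k => (Module.finrank ℂ (cycleDeg p k) : ℂ)) * (1 - PowerSeries.X) ^ 2 =
      1 + PowerSeries.C ((p : ℂ) - 2) * PowerSeries.X + PowerSeries.X ^ 2 := by
  have h1 : ∀ k : ℕ, 1 ≤ k → Module.finrank ℂ (cycleDeg p k) = k * p :=
    fun k hk => finrank_cycleDeg hp hodd hp5 hk
  have h0 : Module.finrank ℂ (cycleDeg p 0) = 1 := finrank_cycleDeg_zero hp hodd hp5
  refine ⟨h1, ?_⟩
  set A : ℕ → ℂ := fun n => (Module.finrank ℂ (cycleDeg p n) : ℂ) with hA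
  have hA0 : A 0 = 1 := by simp [hA, h0]
  have hAn : ∀ n : ℕ, 1 ≤ n → A n = (n : ℂ) * p := by
    intro n hn
    simp only [hA, h1 n hn]
    push_cast
    ring
  have hexp : PowerSeries.mk A * (1 - PowerSeries.X) ^ 2
      = PowerSeries.mk A + PowerSeries.mk A * PowerSeries.X ^ 2
        - (PowerSeries.mk A * PowerSeries.X ^ 1 + PowerSeries.mk A * PowerSeries.X ^ 1) := by
    ring
  have hrhs : ∀ n : ℕ, (PowerSeries.coeff n)
      (1 + PowerSeries.C ((p : ℂ) - 2) * PowerSeries.X + PowerSeries.X ^ 2)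
      = if n = 0 then 1 else if n = 1 then (p : ℂ) - 2 else if n = 2 then 1 else 0 := by
    intro n
    simp only [map_add, PowerSeries.coeff_one, PowerSeries.coeff_C_mul, PowerSeries.coeff_X,
      PowerSeries.coeff_X_pow, mul_ite, mul_one, mul_zero]
    rcases n with _ | _ | _ | n <;> norm_num
  rw [hexp]
  ext n
  rw [hrhs]
  simp only [map_sub, map_add, PowerSeries.coeff_mul_X_pow', PowerSeries.coeff_mk]
  rcases n with _ | _ | _ | n
  · norm_num [hA0]
  · norm_num [hA0, hAn 1 le_rfl]
  · have e1 : 2 - 1 = 1 := by omega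
    norm_num [e1, hA0, hAn 1 le_rfl, hAn 2 (by norm_num)]
    ring
  · have e1 : n + 3 - 1 = n + 2 := by omega
    have e2 : n + 3 - 2 = n + 1 := by omega
    have c1 : (1 : ℕ) ≤ n + 3 := by omega
    have c2 : (2 : ℕ) ≤ n + 3 := by omega
    rw [if_pos c2, if_pos c1, e1, e2]
    simp only [hAn (n+3) (by omega), hAn (n+2) (by omega), hAn (n+1) (by omega)]
    have : ¬ (n + 3 = 0) := by omega
    simp only [this, if_false, (by omega : ¬ (n + 3 = 1)), (by omega : ¬ (n + 3 = 2))]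
    push_cast
    ring
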